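/- arXiv:2012.05871 — 4 statements merged into one kernel-verified Lean document; each statement's English description precedes it below -/
import Mathlib

section
/- For every function f ∈ L¹([a,b]) with a < b and every ε > 0, there exist a natural number n and vectors α, β, w ∈ ℝⁿ such that the single-hidden-layer network G(x) = Σ_{i=1}^n wᵢ σ(αᵢ x + βᵢ) satisfies ∫_a^b |G(x) − f(x)| dx < ε. -/
/-- Logistic sigmoid function. -/
noncomputable def sigmoid (z : ℝ) : ℝ := 1 / (1 + Real.exp (-z))

open MeasureTheory Set Filter Topology

noncomputable def Hs (c x : ℝ) : ℝ := if c ≤ x then 1 else 0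

lemma one_add_exp_pos (z : ℝ) : (0:ℝ) < 1 + Real.exp (-z) := by positivity

lemma sigmoid_pos (z : ℝ) : 0 < sigmoid z := by
  unfold sigmoid; positivity

lemma sigmoid_le_one (z : ℝ) : sigmoid z ≤ 1 := by
  unfold sigmoid
  rw [div_le_one (one_add_exp_pos z)]
  nlinarith [Real.exp_pos (-z)]

lemma abs_sigmoid_le (z : ℝ) : |sigmoid z| ≤ 1 := by
  rw [abs_of_pos (sigmoid_pos z)]; exact sigmoid_le_one z

lemma abs_Hs_le (c x : ℝ) : |Hs c x| ≤ 1 := by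
  unfold Hs; split <;> simp

lemma continuous_sigmoid' : Continuous sigmoid := by
  unfold sigmoid
  exact continuous_const.div (by continuity) (fun z => (one_add_exp_pos z).ne')

lemma measurable_Hs (c : ℝ) : Measurable (Hs c) :=
  Measurable.ite measurableSet_Ici measurable_const measurable_const

lemma tendsto_sigmoid_pos {u : ℝ} (hu : 0 < u) :
    Tendsto (fun k : ℕ => sigmoid (k * u)) atTop (𝓝 1) := by
  have h1 : Tendsto (fun k : ℕ => (k : ℝ) * u) atTop atTop :=
    Tendsto.atTop_mul_const hu tendsto_natCast_atTop_atTop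
  have h2 : Tendsto (fun k : ℕ => Real.exp (-((k:ℝ) * u))) atTop (𝓝 0) :=
    Real.tendsto_exp_atBot.comp (tendsto_neg_atBot_iff.mpr h1)
  have h3 : Tendsto (fun k : ℕ => 1 + Real.exp (-((k:ℝ) * u))) atTop (𝓝 1) := by
    simpa using tendsto_const_nhds.add h2
  have := h3.inv₀ (by norm_num)
  simpa [sigmoid, one_div] using this

lemma tendsto_sigmoid_neg {u : ℝ} (hu : u < 0) :
    Tendsto (fun k : ℕ => sigmoid (k * u)) atTop (𝓝 0) := by
  have h1 : Tendsto (fun k : ℕ => -((k : ℝ) * u)) atTop atTop := by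
    have : Tendsto (fun k : ℕ => (k : ℝ) * (-u)) atTop atTop :=
      Tendsto.atTop_mul_const (by linarith) tendsto_natCast_atTop_atTop
    simpa [mul_comm, neg_mul, mul_neg] using this
  have h2 : Tendsto (fun k : ℕ => 1 + Real.exp (-((k:ℝ) * u))) atTop atTop :=
    tendsto_atTop_add_const_left _ _ (Real.tendsto_exp_atTop.comp h1)
  have := h2.inv_tendsto_atTop
  simpa [sigmoid, one_div] using (show Tendsto (fun k : ℕ => (1 + Real.exp (-((k:ℝ) * u)))⁻¹) atTop (𝓝 0) from this)

lemma finite_restrict (a b : ℝ) : IsFiniteMeasure (volume.restrict (Icc a b)) := by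
  constructor
  rw [Measure.restrict_apply_univ]
  exact measure_Icc_lt_top

lemma integrableOn_of_bounded' {f : ℝ → ℝ} (hm : Measurable f) {C : ℝ}
    (hC : ∀ x, |f x| ≤ C) : IntegrableOn f (Icc a b) := by
  have := finite_restrict a b
  exact ⟨hm.aestronglyMeasurable,
    HasFiniteIntegral.of_bounded (C := C) (ae_of_all _ (by simpa [Real.norm_eq_abs] using hC))⟩

lemma heaviside_approx (a b c : ℝ) {ε : ℝ} (hε : 0 < ε) :
    ∃ K : ℝ, ∫ x in Icc a b, |sigmoid (K * (x - c)) - Hs c x| < ε := by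
  have := finite_restrict a b
  set μ := volume.restrict (Icc a b)
  have hmeas : ∀ k : ℕ, AEStronglyMeasurable
      (fun x => |sigmoid ((k:ℝ) * (x - c)) - Hs c x|) μ := by
    intro k
    exact ((continuous_sigmoid'.comp (by continuity)).measurable.sub
      (measurable_Hs c)).abs.aestronglyMeasurable
  have hbound : ∀ k : ℕ, ∀ᵐ x ∂μ,
      ‖|sigmoid ((k:ℝ) * (x - c)) - Hs c x|‖ ≤ (2:ℝ) := by
    intro k
    filter_upwards with x
    rw [Real.norm_eq_abs, abs_abs]
    calc |sigmoid ((k:ℝ) * (x - c)) - Hs c x|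
        ≤ |sigmoid ((k:ℝ) * (x - c))| + |Hs c x| := abs_sub _ _
      _ ≤ 1 + 1 := add_le_add (abs_sigmoid_le _) (abs_Hs_le _ _)
      _ = 2 := by norm_num
  have hlim : ∀ᵐ x ∂μ,
      Tendsto (fun k : ℕ => |sigmoid ((k:ℝ) * (x - c)) - Hs c x|) atTop (𝓝 0) := by
    have hc : ∀ᵐ x ∂μ, x ≠ c := by
      refine ae_restrict_of_ae ?_
      have : volume ({c} : Set ℝ) = 0 := Real.volume_singleton
      exact (compl_mem_ae_iff.mpr this : ∀ᵐ x, x ∉ ({c} : Set ℝ))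
    filter_upwards [hc] with x hx
    rcases lt_or_gt_of_ne hx with h | h
    · have : Hs c x = 0 := by unfold Hs; rw [if_neg (by linarith)]
      rw [this]
      have := (tendsto_sigmoid_neg (by linarith : x - c < 0)).sub_const 0
      simpa [abs_nonneg] using this.abs
    · have : Hs c x = 1 := by unfold Hs; rw [if_pos (by linarith)]
      rw [this]
      have := (tendsto_sigmoid_pos (by linarith : 0 < x - c)).sub_const 1
      simpa using this.abs
  have key : Tendsto (fun k : ℕ => ∫ x, |sigmoid ((k:ℝ) * (x - c)) - Hs c x| ∂μ)
      atTop (𝓝 (∫ _x, (0:ℝ) ∂μ)) :=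
    tendsto_integral_of_dominated_convergence (fun _ => (2:ℝ)) hmeas
      (integrable_const 2) hbound hlim
  rw [integral_zero] at key
  have := (key.eventually (eventually_lt_nhds hε)).exists
  obtain ⟨k, hk⟩ := this
  exact ⟨(k:ℝ), hk⟩

lemma net_approx (a b : ℝ) (n : ℕ) (c d : Fin n → ℝ) {ε : ℝ} (hε : 0 < ε) :
    ∃ α β : Fin n → ℝ, ∫ x in Icc a b,
      |(∑ i, d i * sigmoid (α i * x + β i)) - ∑ i, d i * Hs (c i) x| < ε := by
  rcases Nat.eq_zero_or_pos n with hn | hn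
  · subst hn
    refine ⟨0, 0, ?_⟩
    simpa using hε
  have hεn : ∀ i : Fin n, 0 < ε / (n * (|d i| + 1)) := by
    intro i
    apply div_pos hε
    have : (0:ℝ) < n := by exact_mod_cast hn
    positivity
  choose K hK using fun i : Fin n => heaviside_approx a b (c i) (hεn i)
  refine ⟨K, fun i => -(K i * c i), ?_⟩
  have hform : ∀ i (x : ℝ), K i * x + -(K i * c i) = K i * (x - c i) := by
    intro i x; ring
  have hint_i : ∀ i : Fin n,
      IntegrableOn (fun x => |sigmoid (K i * (x - c i)) - Hs (c i) x|) (Icc a b) := by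
    intro i
    apply integrableOn_of_bounded' (C := 2)
    · exact ((continuous_sigmoid'.comp (by continuity)).measurable.sub
        (measurable_Hs (c i))).abs
    · intro x
      rw [abs_abs]
      calc |sigmoid (K i * (x - c i)) - Hs (c i) x|
          ≤ |sigmoid (K i * (x - c i))| + |Hs (c i) x| := abs_sub _ _
        _ ≤ 1 + 1 := add_le_add (abs_sigmoid_le _) (abs_Hs_le _ _)
        _ = 2 := by norm_num
  have hint_lhs : IntegrableOn (fun x =>
      |(∑ i, d i * sigmoid (K i * x + -(K i * c i))) - ∑ i, d i * Hs (c i) x|) (Icc a b) := by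
    apply integrableOn_of_bounded' (C := ∑ i, |d i| * 2)
    · apply Measurable.abs
      apply Measurable.sub
      · exact Finset.measurable_sum _ (fun i _ =>
          measurable_const.mul (continuous_sigmoid'.measurable.comp (by fun_prop)))
      · exact Finset.measurable_sum _ (fun i _ => measurable_const.mul (measurable_Hs (c i)))
    · intro x
      rw [abs_abs, ← Finset.sum_sub_distrib]
      calc |∑ i, (d i * sigmoid (K i * x + -(K i * c i)) - d i * Hs (c i) x)|
          ≤ ∑ i, |d i * sigmoid (K i * x + -(K i * c i)) - d i * Hs (c i) x| :=
            Finset.abs_sum_le_sum_abs _ _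
        _ ≤ ∑ i, |d i| * 2 := by
            apply Finset.sum_le_sum
            intro i _
            rw [← mul_sub, abs_mul]
            apply mul_le_mul_of_nonneg_left _ (abs_nonneg _)
            calc |sigmoid (K i * x + -(K i * c i)) - Hs (c i) x|
                ≤ |sigmoid (K i * x + -(K i * c i))| + |Hs (c i) x| := abs_sub _ _
              _ ≤ 2 := by
                  have := abs_sigmoid_le (K i * x + -(K i * c i))
                  have := abs_Hs_le (c i) x
                  linarith
  calc ∫ x in Icc a b, |(∑ i, d i * sigmoid (K i * x + -(K i * c i))) - ∑ i, d i * Hs (c i) x|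
      ≤ ∫ x in Icc a b, ∑ i, |d i| * |sigmoid (K i * (x - c i)) - Hs (c i) x| := by
        apply integral_mono hint_lhs
        · exact integrable_finset_sum _ (fun i _ => ((hint_i i).const_mul _))
        · intro x
          dsimp only
          rw [← Finset.sum_sub_distrib]
          refine (Finset.abs_sum_le_sum_abs _ _).trans (Finset.sum_le_sum fun i _ => ?_)
          rw [hform, ← mul_sub, abs_mul]
    _ = ∑ i, |d i| * ∫ x in Icc a b, |sigmoid (K i * (x - c i)) - Hs (c i) x| := by
        rw [integral_finset_sum]
        · congr 1; ext i; rw [integral_const_mul]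
        · exact fun i _ => ((hint_i i).const_mul _)
    _ < ∑ _i : Fin n, ε / n := by
        apply Finset.sum_lt_sum_of_nonempty
        · exact Finset.univ_nonempty_iff.mpr (Fin.pos_iff_nonempty.mp hn)
        · intro i _
          have hI0 : 0 ≤ ∫ x in Icc a b, |sigmoid (K i * (x - c i)) - Hs (c i) x| :=
            integral_nonneg (fun x => abs_nonneg _)
          have hnpos : (0:ℝ) < n := by exact_mod_cast hn
          rcases eq_or_ne (d i) 0 with h0 | h0
          · rw [h0]; simpa using div_pos hε hnpos
          · have hdpos : 0 < |d i| := abs_pos.mpr h0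
            calc |d i| * ∫ x in Icc a b, |sigmoid (K i * (x - c i)) - Hs (c i) x|
                < |d i| * (ε / (n * (|d i| + 1))) := by
                  exact mul_lt_mul_of_pos_left (hK i) hdpos
              _ ≤ ε / n := by
                  rw [div_mul_eq_div_div, mul_div_assoc',
                    div_le_iff₀ (by positivity : (0:ℝ) < |d i| + 1)]
                  nlinarith [div_pos hε hnpos, abs_nonneg (d i)]
    _ = ε := by
        rw [Finset.sum_const, Finset.card_univ, Fintype.card_fin, nsmul_eq_mul]
        field_simp

lemma step_approx (a b : ℝ) (hab : a < b) {g : ℝ → ℝ} (hg : Continuous g)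
    {ε : ℝ} (hε : 0 < ε) :
    ∃ (n : ℕ) (c d : Fin n → ℝ),
      ∫ x in Icc a b, |(∑ i, d i * Hs (c i) x) - g x| < ε := by
  have hba : 0 < b - a := by linarith
  set ε₀ : ℝ := ε / (2 * (b - a)) with hε₀def
  have hε₀ : 0 < ε₀ := by positivity
  have hUC : UniformContinuousOn g (Icc a b) :=
    isCompact_Icc.uniformContinuousOn_of_continuous hg.continuousOn
  obtain ⟨δ, hδ, hδ'⟩ := (Metric.uniformContinuousOn_iff.mp hUC) ε₀ hε₀
  obtain ⟨m, hm⟩ := exists_nat_gt ((b - a) / δ)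
  have hm0 : 0 < m := by
    rcases Nat.eq_zero_or_pos m with rfl | h
    · exfalso
      have : (0:ℝ) < (b - a) / δ := div_pos hba hδ
      simp only [Nat.cast_zero] at hm
      linarith
    · exact h
  set s : ℝ := (b - a) / m with hsdef
  have hmR : (0:ℝ) < m := by exact_mod_cast hm0
  have hs : 0 < s := by positivity
  have hsδ : s < δ := by
    rw [hsdef, div_lt_iff₀ hmR]
    rw [div_lt_iff₀ hδ] at hm
    linarith [mul_comm δ (m:ℝ)] 
  -- the step function data
  set ψ : ℕ → ℝ := fun j => if j = 0 then 0 else g (a + (↑(j - 1) : ℝ) * s) with hψdef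
  refine ⟨m, fun j => a + (j : ℝ) * s, fun j => ψ (j + 1) - ψ j, ?_⟩
  -- pointwise bound on Icc
  have key : ∀ x ∈ Icc a b,
      |(∑ j : Fin m, (ψ (j + 1) - ψ j) * Hs (a + (j : ℝ) * s) x) - g x| ≤ ε₀ := by
    intro x hx
    obtain ⟨hax, hxb⟩ := hx
    set J : ℕ := min (m - 1) ⌊(x - a) / s⌋₊ with hJdef
    have hJm1 : J ≤ m - 1 := min_le_left _ _
    have hJm : J < m := by omega
    have hfl : 0 ≤ (x - a) / s := div_nonneg (by linarith) hs.le
    -- characterization of which Heavisides fire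
    have hiff : ∀ j : ℕ, j < m → ((a + (j : ℝ) * s ≤ x) ↔ j ≤ J) := by
      intro j hj
      have h1 : (a + (j : ℝ) * s ≤ x) ↔ (j : ℝ) ≤ (x - a) / s := by
        rw [le_div_iff₀ hs]
        constructor <;> intro h <;> linarith
      rw [h1, ← Nat.le_floor_iff hfl, hJdef, le_min_iff]
      constructor
      · intro h; exact ⟨by omega, h⟩
      · intro h; exact h.2
    -- the sum telescopes
    have hsum : (∑ j : Fin m, (ψ (j + 1) - ψ j) * Hs (a + (j : ℝ) * s) x)
        = g (a + (J : ℝ) * s) := by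
      rw [Fin.sum_univ_eq_sum_range (fun j => (ψ (j + 1) - ψ j) * Hs (a + (j : ℝ) * s) x)]
      have h1 : ∀ j ∈ Finset.range m,
          (ψ (j + 1) - ψ j) * Hs (a + (j : ℝ) * s) x
            = if j ≤ J then ψ (j + 1) - ψ j else 0 := by
        intro j hj
        rw [Finset.mem_range] at hj
        unfold Hs
        by_cases h : a + (j : ℝ) * s ≤ x
        · rw [if_pos h, if_pos ((hiff j hj).mp h), mul_one]
        · rw [if_neg h, if_neg (fun hc => h ((hiff j hj).mpr hc)), mul_zero]
      rw [Finset.sum_congr rfl h1, ← Finset.sum_filter]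
      have h2 : (Finset.range m).filter (fun j => j ≤ J) = Finset.range (J + 1) := by
        ext j
        simp only [Finset.mem_filter, Finset.mem_range]
        omega
      rw [h2, Finset.sum_range_sub ψ]
      simp [hψdef]
    rw [hsum]
    -- the chosen point is δ-close to x
    have hJle : a + (J : ℝ) * s ≤ x := (hiff J hJm).mpr le_rfl
    have hxup : x ≤ a + ((J : ℝ) + 1) * s := by
      rcases le_or_gt ⌊(x - a) / s⌋₊ (m - 1) with h | h
      · have hJf : J = ⌊(x - a) / s⌋₊ := by omega
        have := Nat.lt_floor_add_one ((x - a) / s)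
        rw [← hJf] at this
        rw [div_lt_iff₀ hs] at this
        linarith
      · have hJf : J = m - 1 := by omega
        have hms : a + (m : ℝ) * s = b := by
          rw [hsdef, mul_div_assoc', mul_div_cancel_left₀ _ hmR.ne']; ring
        have : ((J : ℝ) + 1) = (m : ℝ) := by
          rw [hJf]
          have : ((m - 1 : ℕ) : ℝ) = (m : ℝ) - 1 := by
            rw [Nat.cast_sub hm0]; norm_num
          rw [this]; ring
        rw [this, hms]
        exact hxb
    have hmem : a + (J : ℝ) * s ∈ Icc a b := by
      constructor
      · nlinarith [Nat.cast_nonneg (α := ℝ) J]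
      · linarith
    have hdist : dist (a + (J : ℝ) * s) x < δ := by
      rw [Real.dist_eq, abs_of_nonpos (by linarith)]
      have : x - (a + (J : ℝ) * s) ≤ s := by linarith
      linarith
    have := hδ' _ hmem x ⟨hax, hxb⟩ hdist
    rw [Real.dist_eq] at this
    exact le_of_lt this
  -- integrate the pointwise bound
  have hint_step : IntegrableOn
      (fun x => ∑ j : Fin m, (ψ (j + 1) - ψ j) * Hs (a + (j : ℝ) * s) x) (Icc a b) := by
    apply integrableOn_of_bounded' (C := ∑ j : Fin m, |ψ (j + 1) - ψ j|)
    · exact Finset.measurable_sum _ (fun j _ => measurable_const.mul (measurable_Hs _))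
    · intro x
      refine (Finset.abs_sum_le_sum_abs _ _).trans (Finset.sum_le_sum fun j _ => ?_)
      rw [abs_mul]
      calc |ψ (j + 1) - ψ j| * |Hs (a + (j:ℝ) * s) x|
          ≤ |ψ (j + 1) - ψ j| * 1 := by
            exact mul_le_mul_of_nonneg_left (abs_Hs_le _ _) (abs_nonneg _)
        _ = _ := mul_one _
  have hint_diff : IntegrableOn
      (fun x => |(∑ j : Fin m, (ψ (j + 1) - ψ j) * Hs (a + (j : ℝ) * s) x) - g x|)
      (Icc a b) :=
    ((hint_step.sub (hg.integrableOn_Icc)).abs)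
  calc ∫ x in Icc a b, |(∑ j : Fin m, (ψ (j + 1) - ψ j) * Hs (a + (j : ℝ) * s) x) - g x|
      ≤ ∫ _x in Icc a b, ε₀ := by
        apply setIntegral_mono_on hint_diff (integrableOn_const measure_Icc_lt_top.ne)
          measurableSet_Icc
        exact key
    _ = ε₀ * (b - a) := by
        rw [setIntegral_const]
        rw [Real.volume_real_Icc_of_le hab.le]
        simp [smul_eq_mul, mul_comm]
    _ < ε := by
        rw [hε₀def]
        rw [div_mul_eq_mul_div, mul_comm 2 (b - a)]
        rw [div_lt_iff₀ (by positivity)]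
        nlinarith

/-- Universal approximation in `L¹`: for every integrable function `f` on `[a,b]` and
every `ε > 0`, there is a single-hidden-layer sigmoid network `G` whose `L¹` distance
to `f` on `[a,b]` is less than `ε`. -/
theorem elm_universal_approx_L1 (a b : ℝ) (hab : a < b) (f : ℝ → ℝ)
    (hf : MeasureTheory.IntegrableOn f (Set.Icc a b)) (ε : ℝ) (hε : 0 < ε) :
    ∃ (n : ℕ) (α β w : Fin n → ℝ),
      ∫ x in Set.Icc a b, |(∑ i, w i * sigmoid (α i * x + β i)) - f x| < ε := by
  -- Step 1: continuous approximation in L¹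
  set F : ℝ → ℝ := (Icc a b).indicator f with hF
  have hFint : Integrable F := hf.integrable_indicator measurableSet_Icc
  obtain ⟨g, -, hgle, hgcont, hgint⟩ :=
    hFint.exists_hasCompactSupport_integral_sub_le (by positivity : (0:ℝ) < ε/3)
  have h3 : ∫ x in Icc a b, |g x - f x| ≤ ε / 3 := by
    have he : ∀ x ∈ Icc a b, |g x - f x| = ‖F x - g x‖ := by
      intro x hx
      rw [hF, indicator_of_mem hx, Real.norm_eq_abs, abs_sub_comm]
    rw [setIntegral_congr_fun measurableSet_Icc he]
    refine le_trans (setIntegral_le_integral ((hFint.sub hgint).norm) ?_) hgle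
    filter_upwards with x using norm_nonneg _
  -- Step 2: step-function approximation of g
  obtain ⟨n, c, d, h2⟩ := step_approx a b hab hgcont (by positivity : (0:ℝ) < ε/3)
  -- Step 3: network approximation of the step function
  obtain ⟨α, β, h1⟩ := net_approx a b n c d (by positivity : (0:ℝ) < ε/3)
  refine ⟨n, α, β, d, ?_⟩
  -- integrability bookkeeping
  have hnet : IntegrableOn (fun x => ∑ i, d i * sigmoid (α i * x + β i)) (Icc a b) := by
    apply integrableOn_of_bounded' (C := ∑ i, |d i|)
    · exact Finset.measurable_sum _ (fun i _ =>
        measurable_const.mul (continuous_sigmoid'.measurable.comp (by fun_prop)))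
    · intro x
      refine (Finset.abs_sum_le_sum_abs _ _).trans (Finset.sum_le_sum fun i _ => ?_)
      rw [abs_mul]
      calc |d i| * |sigmoid (α i * x + β i)| ≤ |d i| * 1 :=
            mul_le_mul_of_nonneg_left (abs_sigmoid_le _) (abs_nonneg _)
        _ = |d i| := mul_one _
  have hstep : IntegrableOn (fun x => ∑ i, d i * Hs (c i) x) (Icc a b) := by
    apply integrableOn_of_bounded' (C := ∑ i, |d i|)
    · exact Finset.measurable_sum _ (fun i _ => measurable_const.mul (measurable_Hs _))
    · intro x
      refine (Finset.abs_sum_le_sum_abs _ _).trans (Finset.sum_le_sum fun i _ => ?_)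
      rw [abs_mul]
      calc |d i| * |Hs (c i) x| ≤ |d i| * 1 :=
            mul_le_mul_of_nonneg_left (abs_Hs_le _ _) (abs_nonneg _)
        _ = |d i| := mul_one _
  have hgOn : IntegrableOn g (Icc a b) := hgcont.integrableOn_Icc
  have i1 : IntegrableOn (fun x =>
      |(∑ i, d i * sigmoid (α i * x + β i)) - f x|) (Icc a b) := (hnet.sub hf).abs
  have i2 : IntegrableOn (fun x =>
      |(∑ i, d i * sigmoid (α i * x + β i)) - ∑ i, d i * Hs (c i) x|) (Icc a b) :=
    (hnet.sub hstep).abs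
  have i3 : IntegrableOn (fun x =>
      |(∑ i, d i * Hs (c i) x) - g x|) (Icc a b) := (hstep.sub hgOn).abs
  have i4 : IntegrableOn (fun x => |g x - f x|) (Icc a b) := (hgOn.sub hf).abs
  have tri : ∫ x in Icc a b, |(∑ i, d i * sigmoid (α i * x + β i)) - f x|
      ≤ (∫ x in Icc a b, |(∑ i, d i * sigmoid (α i * x + β i)) - ∑ i, d i * Hs (c i) x|)
        + ((∫ x in Icc a b, |(∑ i, d i * Hs (c i) x) - g x|)
        + ∫ x in Icc a b, |g x - f x|) := by
    have i34 : Integrable (fun x => |(∑ i, d i * Hs (c i) x) - g x| + |g x - f x|)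
        (volume.restrict (Icc a b)) := i3.add i4
    rw [← integral_add i3 i4, ← integral_add i2 i34]
    apply integral_mono i1 (i2.add i34)
    intro x
    dsimp only
    calc |(∑ i, d i * sigmoid (α i * x + β i)) - f x|
        = |((∑ i, d i * sigmoid (α i * x + β i)) - ∑ i, d i * Hs (c i) x)
            + (((∑ i, d i * Hs (c i) x) - g x) + (g x - f x))| := by congr 1; ring
      _ ≤ _ := by
          refine (abs_add_le _ _).trans (add_le_add_right (abs_add_le _ _) _)
  linarith
end

section
/- Let (α₁, β₁) and (α₂, β₂) be two pairs of real parameters with (α₁, β₁) ≠ (α₂, β₂) and not both α₁ = 0 and α₂ = 0. Then the two functions x ↦ σ(α₁ x + β₁) and x ↦ σ(α₂ x + β₂) from ℝ to ℝ are linearly independent. -/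
/-- Two sigmoid functions with distinct parameter pairs (not both degenerate, i.e. not both
internal weights zero) are linearly independent. -/
theorem sigmoid_linearly_independent (α₁ β₁ α₂ β₂ : ℝ)
    (hne : (α₁, β₁) ≠ (α₂, β₂)) (hα : ¬(α₁ = 0 ∧ α₂ = 0)) :
    ∀ c₁ c₂ : ℝ,
      (∀ x : ℝ, c₁ * sigmoid (α₁ * x + β₁) + c₂ * sigmoid (α₂ * x + β₂) = 0) →
      c₁ = 0 ∧ c₂ = 0 := by
  intro c₁ c₂ h
  have key : ∀ x : ℝ, c₁ * (1 + Real.exp (-(α₂*x+β₂))) + c₂ * (1 + Real.exp (-(α₁*x+β₁))) = 0 := by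
    intro x
    have h1 : (0:ℝ) < 1 + Real.exp (-(α₁*x+β₁)) := by positivity
    have h2 : (0:ℝ) < 1 + Real.exp (-(α₂*x+β₂)) := by positivity
    have hx := h x
    unfold sigmoid at hx
    field_simp at hx
    rw [show -(α₂*x+β₂) = -β₂ + -(α₂*x) by ring, show -(α₁*x+β₁) = -β₁ + -(α₁*x) by ring]
    rw [show -(x*α₂+β₂) = -β₂ + -(α₂*x) by ring, show -(α₁*x+β₁) = -β₁ + -(α₁*x) by ring] at hx
    linarith
  set u : ℝ := Real.exp (-α₁) with hu
  set v : ℝ := Real.exp (-α₂) with hv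
  set B₁ : ℝ := Real.exp (-β₁) with hB₁
  set B₂ : ℝ := Real.exp (-β₂) with hB₂
  have hB₁pos : 0 < B₁ := Real.exp_pos _
  have hB₂pos : 0 < B₂ := Real.exp_pos _
  have E0 : c₁ * (1 + B₂) + c₂ * (1 + B₁) = 0 := by
    have := key 0
    simpa using this
  have E1 : c₁ * (1 + v * B₂) + c₂ * (1 + u * B₁) = 0 := by
    have := key 1
    rw [show -(α₂*(1:ℝ)+β₂) = -α₂ + -β₂ by ring, show -(α₁*(1:ℝ)+β₁) = -α₁ + -β₁ by ring,
      Real.exp_add, Real.exp_add] at this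
    exact this
  have E2 : c₁ * (1 + v * v * B₂) + c₂ * (1 + u * u * B₁) = 0 := by
    have := key 2
    rw [show -(α₂*(2:ℝ)+β₂) = -α₂ + (-α₂ + -β₂) by ring,
      show -(α₁*(2:ℝ)+β₁) = -α₁ + (-α₁ + -β₁) by ring,
      Real.exp_add, Real.exp_add, Real.exp_add, Real.exp_add] at this
    rw [← hu, ← hv, ← hB₁, ← hB₂] at this
    linarith [this]
  by_cases hA : α₁ = α₂
  · -- equal slopes, necessarily nonzero
    subst hA
    have hα1 : α₁ ≠ 0 := by
      intro h0
      exact hα ⟨h0, h0⟩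
    have huv : v = u := by rw [hu, hv]
    rw [huv] at E1
    have hu1 : u - 1 ≠ 0 := by
      intro h0
      have : u = 1 := by linarith
      rw [hu, Real.exp_eq_one_iff] at this
      exact hα1 (by linarith)
    have h5 : (c₁ * B₂ + c₂ * B₁) * (u - 1) = 0 := by linear_combination E1 - E0
    have h6 : c₁ * B₂ + c₂ * B₁ = 0 := by
      rcases mul_eq_zero.mp h5 with h | h
      · exact h
      · exact absurd h hu1
    have h7 : c₁ + c₂ = 0 := by linear_combination E0 - h6
    by_cases hc : c₁ = 0
    · exact ⟨hc, by linarith⟩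
    · exfalso
      have h8 : c₁ * (B₂ - B₁) = 0 := by linear_combination h6 - B₁ * h7
      have h9 : B₂ = B₁ := by
        rcases mul_eq_zero.mp h8 with h | h
        · exact absurd h hc
        · linarith
      have h10 : Real.exp (-β₂) = Real.exp (-β₁) := by rw [← hB₂, ← hB₁]; exact h9
      have : β₂ = β₁ := by
        have := Real.exp_injective h10
        linarith
      exact hne (by rw [this])
  · have huv : u ≠ v := by
      intro h0
      rw [hu, hv] at h0
      exact hA (by have := Real.exp_injective h0; linarith)
    by_cases hα2 : α₂ = 0
    · -- then α₁ ≠ 0; eliminate c₂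
      have hα1 : α₁ ≠ 0 := by
        intro h0
        exact hA (by rw [h0, hα2])
      have hu1 : u - 1 ≠ 0 := by
        intro h0
        have : u = 1 := by linarith
        rw [hu, Real.exp_eq_one_iff] at this
        exact hα1 (by linarith)
      have h5 : c₂ * (B₁ * ((u - 1) * (v - u))) = 0 := by
        linear_combination (v + 1) * E1 - v * E0 - E2
      have hc2 : c₂ = 0 := by
        rcases mul_eq_zero.mp h5 with h | h
        · exact h
        · rcases mul_eq_zero.mp h with h | h
          · exact absurd h (ne_of_gt hB₁pos)
          · rcases mul_eq_zero.mp h with h | h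
            · exact absurd h hu1
            · exact absurd h (sub_ne_zero.mpr (Ne.symm huv))
      have hc1 : c₁ = 0 := by
        rw [hc2] at E0
        have : c₁ * (1 + B₂) = 0 := by linarith
        rcases mul_eq_zero.mp this with h | h
        · exact h
        · exfalso; linarith
      exact ⟨hc1, hc2⟩
    · -- α₂ ≠ 0; eliminate c₁
      have hv1 : v - 1 ≠ 0 := by
        intro h0
        have : v = 1 := by linarith
        rw [hv, Real.exp_eq_one_iff] at this
        exact hα2 (by linarith)
      have h5 : c₁ * (B₂ * ((v - 1) * (u - v))) = 0 := by
        linear_combination (u + 1) * E1 - u * E0 - E2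
      have hc1 : c₁ = 0 := by
        rcases mul_eq_zero.mp h5 with h | h
        · exact h
        · rcases mul_eq_zero.mp h with h | h
          · exact absurd h (ne_of_gt hB₂pos)
          · rcases mul_eq_zero.mp h with h | h
            · exact absurd h hv1
            · exact absurd h (sub_ne_zero.mpr huv)
      have hc2 : c₂ = 0 := by
        rw [hc1] at E0
        have : c₂ * (1 + B₁) = 0 := by linarith
        rcases mul_eq_zero.mp this with h | h
        · exact h
        · exfalso; linarith
      exact ⟨hc1, hc2⟩
end

section
/- Let x₁ < x₂ < … < x_n be n distinct real numbers. Then the set of parameter pairs (α, β) ∈ ℝⁿ × ℝⁿ for which the n × n matrix with entries M_{ij} = σ(αᵢ xⱼ + βᵢ) is singular (has zero determinant) has Lebesgue measure zero in ℝ^{2n}. -/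
open MeasureTheory Filter Set

lemma analyticAt_sigmoid_comp {E : Type*} [NormedAddCommGroup E] [NormedSpace ℝ E]
    {f : E → ℝ} {x : E} (hf : AnalyticAt ℝ f x) :
    AnalyticAt ℝ (fun p => sigmoid (f p)) x := by
  unfold sigmoid
  exact analyticAt_const.div (analyticAt_const.add hf.neg.rexp) (by positivity)

/-- Zeros of a real-analytic function on `ℝ` that is somewhere nonzero have measure zero. -/
lemma volume_zero_set_one {f : ℝ → ℝ} (hf : AnalyticOnNhd ℝ f Set.univ) {t₀ : ℝ}
    (h0 : f t₀ ≠ 0) : volume {t : ℝ | f t = 0} = 0 := by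
  set S := {t : ℝ | f t = 0} with hS
  have hcnt : S.Countable := by
    have : DiscreteTopology S := by
      rw [discreteTopology_subtype_iff]
      intro z hz
      rcases (hf z (Set.mem_univ z)).eventually_eq_zero_or_eventually_ne_zero with h | h
      · exact absurd (hf.eqOn_zero_of_preconnected_of_eventuallyEq_zero
          isPreconnected_univ (Set.mem_univ z) h (Set.mem_univ t₀)) h0
      · rw [Filter.inf_principal_eq_bot]
        filter_upwards [h] with w hw
        simpa [hS] using hw
    have : Countable S := TopologicalSpace.separableSpace_iff_countable.mp inferInstance
    exact Set.countable_coe_iff.mp this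
  exact hcnt.measure_zero volume

/-- Zeros of a somewhere-nonzero real-analytic function on `ℝⁿ` have measure zero. -/
lemma volume_zero_set_pi : ∀ (n : ℕ) (f : (Fin n → ℝ) → ℝ),
    AnalyticOnNhd ℝ f Set.univ → (∃ p, f p ≠ 0) →
    volume {y : Fin n → ℝ | f y = 0} = 0 := by
  intro n
  induction n with
  | zero =>
    rintro f _ ⟨p, hp⟩
    have : {y : Fin 0 → ℝ | f y = 0} = ∅ := by
      ext y
      simp only [Set.mem_setOf_eq, Set.mem_empty_iff_false, iff_false]
      have : y = p := Subsingleton.elim _ _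
      rw [this]; exact hp
    simp [this]
  | succ n ih =>
    rintro f hf ⟨p, hp⟩
    have hfc : Continuous f := by
      rw [← continuousOn_univ]; exact hf.continuousOn
    set e : (Fin (n + 1) → ℝ) ≃ᵐ ℝ × (Fin n → ℝ) :=
      MeasurableEquiv.piFinSuccAbove (fun _ => ℝ) 0
    have hme : MeasurePreserving e volume volume :=
      volume_preserving_piFinSuccAbove (fun _ : Fin (n + 1) => ℝ) 0
    -- the slice maps are analytic affine embeddings
    have hcons : ∀ (t : ℝ) (y : Fin n → ℝ),
        AnalyticAt ℝ (fun y : Fin n → ℝ => f (Fin.cons t y)) y := by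
      intro t y
      refine (hf _ (Set.mem_univ _)).comp ?_
      refine AnalyticAt.pi fun i => ?_
      refine Fin.cases ?_ (fun j => ?_) i
      · simpa using (analyticAt_const : AnalyticAt ℝ (fun _ : Fin n → ℝ => t) y)
      · simp; exact ((ContinuousLinearMap.proj j :
          (Fin n → ℝ) →L[ℝ] ℝ).analyticAt y)
    have hconsr : ∀ (y : Fin n → ℝ) (t : ℝ),
        AnalyticAt ℝ (fun t : ℝ => f (Fin.cons t y)) t := by
      intro y t
      refine (hf _ (Set.mem_univ _)).comp ?_
      refine AnalyticAt.pi fun i => ?_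
      refine Fin.cases ?_ (fun j => ?_) i
      · simp; exact (analyticAt_id : AnalyticAt ℝ (fun s : ℝ => s) t)
      · simpa using (analyticAt_const : AnalyticAt ℝ (fun _ : ℝ => y j) t)
    -- decompose the witness
    have hpw : f (Fin.cons (p 0) (fun j => p j.succ)) ≠ 0 := by
      have : Fin.cons (p 0) (fun j => p j.succ) = p := by
        ext i
        refine Fin.cases ?_ (fun j => ?_) i <;> simp
      rwa [this]
    set S : Set (ℝ × (Fin n → ℝ)) := {q | f (Fin.cons q.1 q.2) = 0} with hSdef
    have hSm : MeasurableSet S := by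
      have : Continuous fun q : ℝ × (Fin n → ℝ) => f (Fin.cons q.1 q.2) := by
        refine hfc.comp ?_
        refine continuous_pi fun i => ?_
        refine Fin.cases ?_ (fun j => ?_) i
        · simpa using continuous_fst
        · simp; exact (continuous_apply j).comp continuous_snd
      exact measurableSet_eq.preimage this.measurable
    have hpre : e ⁻¹' S = {y : Fin (n + 1) → ℝ | f y = 0} := by
      ext y
      simp only [Set.mem_preimage, hSdef, Set.mem_setOf_eq]
      have : Fin.cons (e y).1 (e y).2 = y := by
        ext i
        refine Fin.cases ?_ (fun j => ?_) i
        · simp [e, MeasurableEquiv.piFinSuccAbove]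
        · simp [e, MeasurableEquiv.piFinSuccAbove, Fin.succAbove, Fin.tail]
      rw [this]
    have hS0 : volume S = 0 := by
      rw [MeasureTheory.Measure.volume_eq_prod, MeasureTheory.Measure.measure_prod_null hSm]
      have hbad : volume {t : ℝ | f (Fin.cons t (fun j => p j.succ)) = 0} = 0 :=
        volume_zero_set_one (fun t _ => hconsr _ t) hpw
      have : ∀ᵐ t : ℝ, f (Fin.cons t (fun j => p j.succ)) ≠ 0 := by
        rw [MeasureTheory.ae_iff]
        simpa using hbad
      filter_upwards [this] with t ht
      have : Prod.mk t ⁻¹' S = {y : Fin n → ℝ | f (Fin.cons t y) = 0} := rfl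
      rw [this]
      exact ih (fun y => f (Fin.cons t y)) (fun y _ => hcons t y) ⟨_, ht⟩
    calc volume {y : Fin (n + 1) → ℝ | f y = 0} = volume (e ⁻¹' S) := by rw [hpre]
      _ = volume S := hme.measure_preimage_equiv S
      _ = 0 := hS0

lemma sigmoid_zero : sigmoid 0 = 1 / 2 := by
  simp [sigmoid]; norm_num

lemma exists_nonsingular_param (n : ℕ) (x : Fin n → ℝ) (hx : StrictMono x) :
    ∃ p : (Fin n → ℝ) × (Fin n → ℝ),
      Matrix.det (Matrix.of fun i j => sigmoid (p.1 i * x j + p.2 i)) ≠ 0 := by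
  classical
  set L : Matrix (Fin n) (Fin n) ℝ :=
    Matrix.of fun i j => if i = j then (1 / 2 : ℝ) else if i < j then 1 else 0 with hL
  have hLtri : L.BlockTriangular id := by
    intro i j hji
    simp only [id] at hji
    have h1 : ¬ i = j := (ne_of_lt hji).symm
    have h2 : ¬ i < j := not_lt_of_gt hji
    simp [hL, h1, h2]
  have hLdet : L.det = (1 / 2 : ℝ) ^ n := by
    rw [Matrix.det_of_upperTriangular hLtri]
    simp [hL]
  have hsig : ∀ i j : Fin n,
      Filter.Tendsto (fun t : ℝ => sigmoid (t * x j + -(t * x i))) Filter.atTop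
        (nhds (L i j)) := by
    intro i j
    have harg : ∀ t : ℝ, t * x j + -(t * x i) = t * (x j - x i) := fun t => by ring
    simp only [harg]
    rcases lt_trichotomy i j with hij | hij | hij
    · have hc : (0 : ℝ) < x j - x i := sub_pos.mpr (hx hij)
      have hLij : L i j = 1 := by simp [hL, (ne_of_lt hij), hij]
      rw [hLij]
      have h1 : Filter.Tendsto (fun t : ℝ => -(t * (x j - x i))) Filter.atTop Filter.atBot :=
        tendsto_neg_atTop_atBot.comp (Filter.Tendsto.atTop_mul_const' hc Filter.tendsto_id)
      have h2 : Filter.Tendsto (fun t : ℝ => 1 + Real.exp (-(t * (x j - x i))))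
          Filter.atTop (nhds 1) := by
        have := (Real.tendsto_exp_atBot.comp h1)
        have h3 := Filter.Tendsto.add (tendsto_const_nhds (x := (1:ℝ)) (f := Filter.atTop)) this
        simpa using h3
      have h4 := h2.inv₀ one_ne_zero
      simpa [sigmoid, one_div] using h4
    · subst hij
      have : ∀ t : ℝ, t * (x i - x i) = 0 := fun t => by ring
      simp only [this, sigmoid_zero]
      have hLii : L i i = 1 / 2 := by simp [hL]
      rw [hLii]
      exact tendsto_const_nhds
    · have hc : x j - x i < 0 := sub_neg.mpr (hx hij)
      have hLij : L i j = 0 := by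
        have h1 : ¬ i = j := (ne_of_gt hij)
        have h2 : ¬ i < j := not_lt_of_gt hij
        simp [hL, h1, h2]
      rw [hLij]
      have h1 : Filter.Tendsto (fun t : ℝ => -(t * (x j - x i))) Filter.atTop Filter.atTop := by
        have heq : (fun t : ℝ => -(t * (x j - x i))) = fun t : ℝ => t * (x i - x j) :=
          funext fun t => by ring
        rw [heq]
        exact Filter.Tendsto.atTop_mul_const' (sub_pos.mpr (hx hij)) Filter.tendsto_id
      have h2 : Filter.Tendsto (fun t : ℝ => 1 + Real.exp (-(t * (x j - x i))))
          Filter.atTop Filter.atTop :=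
        Filter.tendsto_atTop_add_const_left Filter.atTop 1 (Real.tendsto_exp_atTop.comp h1)
      have := tendsto_inv_atTop_zero.comp h2
      simpa [sigmoid, one_div, Function.comp_def] using this
  have htend : Filter.Tendsto
      (fun t : ℝ => (Matrix.of fun i j => sigmoid (t * x j + -(t * x i))).det)
      Filter.atTop (nhds L.det) := by
    simp only [Matrix.det_apply', Matrix.of_apply]
    exact tendsto_finset_sum _ fun sigma _ =>
      Filter.Tendsto.const_mul _ (tendsto_finset_prod _ fun i _ => hsig (sigma i) i)
  have hne : L.det ≠ 0 := by
    rw [hLdet]; positivity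
  obtain ⟨t, ht⟩ := (htend.eventually_ne hne).exists
  exact ⟨(fun _ => t, fun i => -(t * x i)), ht⟩

/-- For distinct nodes `x₁ < ⋯ < xₙ`, the set of parameter pairs `(α, β) ∈ ℝⁿ × ℝⁿ` for which
the ELM collocation matrix `(σ(αᵢ xⱼ + βᵢ))_{ij}` is singular has Lebesgue measure zero. -/
theorem elm_matrix_singular_measure_zero (n : ℕ) (x : Fin n → ℝ) (hx : StrictMono x) :
    MeasureTheory.volume
      {p : (Fin n → ℝ) × (Fin n → ℝ) |
        Matrix.det (Matrix.of fun i j => sigmoid (p.1 i * x j + p.2 i)) = 0} = 0 := by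
  classical
  set F : (Fin n → ℝ) × (Fin n → ℝ) → ℝ :=
    fun p => Matrix.det (Matrix.of fun i j => sigmoid (p.1 i * x j + p.2 i)) with hF
  have hFa : ∀ p, AnalyticAt ℝ F p := by
    intro p
    rw [hF]
    simp only [Matrix.det_apply', Matrix.of_apply]
    refine Finset.analyticAt_fun_sum _ fun σ _ => ?_
    refine AnalyticAt.mul analyticAt_const ?_
    refine Finset.analyticAt_fun_prod _ fun i _ => ?_
    refine analyticAt_sigmoid_comp ?_
    have h1 : AnalyticAt ℝ (fun q : (Fin n → ℝ) × (Fin n → ℝ) => q.1 (σ i)) p :=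
      ((ContinuousLinearMap.proj (σ i)).comp
        (ContinuousLinearMap.fst ℝ (Fin n → ℝ) (Fin n → ℝ))).analyticAt p
    have h2 : AnalyticAt ℝ (fun q : (Fin n → ℝ) × (Fin n → ℝ) => q.2 (σ i)) p :=
      ((ContinuousLinearMap.proj (σ i)).comp
        (ContinuousLinearMap.snd ℝ (Fin n → ℝ) (Fin n → ℝ))).analyticAt p
    exact (h1.mul analyticAt_const).add h2
  have hFc : Continuous F := continuous_iff_continuousAt.mpr fun p => (hFa p).continuousAt
  obtain ⟨p₀, hp₀⟩ := exists_nonsingular_param n x hx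
  have hp₀' : F p₀ ≠ 0 := hp₀
  have hZm : MeasurableSet {p : (Fin n → ℝ) × (Fin n → ℝ) | F p = 0} :=
    (measurableSet_singleton (0 : ℝ)).preimage hFc.measurable
  show MeasureTheory.volume {p : (Fin n → ℝ) × (Fin n → ℝ) | F p = 0} = 0
  rw [MeasureTheory.Measure.volume_eq_prod, MeasureTheory.Measure.measure_prod_null hZm]
  have hbad : volume {α : Fin n → ℝ | F (α, p₀.2) = 0} = 0 := by
    refine volume_zero_set_pi n _ (fun α _ => (hFa _).comp (analyticAt_id.prod analyticAt_const))
      ⟨p₀.1, ?_⟩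
    simpa using hp₀'
  have hae : ∀ᵐ α : Fin n → ℝ, F (α, p₀.2) ≠ 0 := by
    rw [MeasureTheory.ae_iff]
    simpa using hbad
  filter_upwards [hae] with α hα
  have heq : Prod.mk α ⁻¹' {p : (Fin n → ℝ) × (Fin n → ℝ) | F p = 0} = {β | F (α, β) = 0} := rfl
  simp only [Pi.zero_apply, heq]
  exact volume_zero_set_pi n _ (fun β _ => (hFa _).comp (analyticAt_const.prod analyticAt_id))
    ⟨p₀.2, hα⟩
end

section
/- Let x₁ < x₂ < … < x_n be n distinct real numbers and y₁, …, y_n ∈ ℝ arbitrary values. Then there exist vectors α, β, w ∈ ℝⁿ such that Σ_{i=1}^n wᵢ σ(αᵢ xⱼ + βᵢ) = yⱼ for every j = 1, …, n. -/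
open Filter Topology

lemma sigmoid_tendsto_atTop : Tendsto sigmoid atTop (𝓝 1) := by
  have h : Tendsto (fun z : ℝ => 1 + Real.exp (-z)) atTop (𝓝 (1 + 0)) :=
    tendsto_const_nhds.add Real.tendsto_exp_neg_atTop_nhds_zero
  have this : Tendsto (fun z : ℝ => 1 / (1 + Real.exp (-z))) atTop (𝓝 (1 / (1 + 0))) :=
    tendsto_const_nhds.div h (by norm_num)
  have e : sigmoid = fun z : ℝ => 1 / (1 + Real.exp (-z)) := rfl
  rw [e]
  convert this using 2
  norm_num

lemma sigmoid_tendsto_atBot : Tendsto sigmoid atBot (𝓝 0) := by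
  have h1 : Tendsto (fun z : ℝ => Real.exp (-z)) atBot atTop :=
    Real.tendsto_exp_atTop.comp tendsto_neg_atBot_atTop
  have h2 : Tendsto (fun z : ℝ => 1 + Real.exp (-z)) atBot atTop :=
    tendsto_atTop_add_const_left _ _ h1
  have := tendsto_inv_atTop_zero.comp h2
  refine this.congr fun z => ?_
  simp [sigmoid, Function.comp, one_div]

/-- Exact interpolation with `n` neurons at `n` distinct nodes: for any data `(xⱼ, yⱼ)` with
`x₁ < ⋯ < xₙ` there are weights and biases interpolating exactly. -/
theorem elm_exact_interpolation (n : ℕ) (x : Fin n → ℝ) (hx : StrictMono x)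
    (y : Fin n → ℝ) :
    ∃ α β w : Fin n → ℝ,
      ∀ j : Fin n, ∑ i, w i * sigmoid (α i * x j + β i) = y j := by
  classical
  -- thresholds c i with x (i-1) < c i < x i
  set c : Fin n → ℝ := fun i =>
    if h : (i : ℕ) = 0 then x i - 1
    else (x ⟨(i : ℕ) - 1, by omega⟩ + x i) / 2 with hc
  have hc_lt : ∀ i j : Fin n, i ≤ j → c i < x j := by
    intro i j hij
    have hxij : x i ≤ x j := hx.monotone hij
    by_cases h : (i : ℕ) = 0
    · simp only [hc, h, dif_pos]
      linarith
    · simp only [hc, h, dif_neg, not_false_iff]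
      have : x ⟨(i : ℕ) - 1, by omega⟩ < x i := hx (by simp [Fin.lt_def]; omega)
      linarith
  have hc_gt : ∀ i j : Fin n, j < i → x j < c i := by
    intro i j hij
    have h : (i : ℕ) ≠ 0 := by
      have h' : (j : ℕ) < (i : ℕ) := hij
      omega
    simp only [hc, h, dif_neg, not_false_iff]
    have h1 : x j ≤ x ⟨(i : ℕ) - 1, by omega⟩ := by
      apply hx.monotone
      simp [Fin.le_def]
      have : (j : ℕ) < (i : ℕ) := hij
      omega
    have h2 : x ⟨(i : ℕ) - 1, by omega⟩ < x i := hx (by simp [Fin.lt_def]; omega)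
    linarith
  -- matrix family
  set M : ℝ → Matrix (Fin n) (Fin n) ℝ :=
    fun t => Matrix.of fun j i => sigmoid (t * (x j - c i)) with hM
  set L : Matrix (Fin n) (Fin n) ℝ :=
    Matrix.of fun j i => if i ≤ j then (1 : ℝ) else 0 with hL
  have hML : Tendsto M atTop (𝓝 L) := by
    apply tendsto_pi_nhds.2
    intro j
    rw [tendsto_pi_nhds]
    intro i
    by_cases hij : i ≤ j
    · have hpos : 0 < x j - c i := sub_pos.2 (hc_lt i j hij)
      have h1 : Tendsto (fun t : ℝ => t * (x j - c i)) atTop atTop :=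
        Tendsto.atTop_mul_const hpos tendsto_id
      have := sigmoid_tendsto_atTop.comp h1
      simpa [hM, hL, hij, Function.comp_def] using this
    · have hneg : x j - c i < 0 := sub_neg.2 (hc_gt i j (lt_of_not_ge hij))
      have h1 : Tendsto (fun t : ℝ => t * (x j - c i)) atTop atBot :=
        Tendsto.atTop_mul_const_of_neg hneg tendsto_id
      have := sigmoid_tendsto_atBot.comp h1
      simpa [hM, hL, hij, Function.comp_def] using this
  -- det L = 1
  have hLdet : L.det = 1 := by
    have htri : L.BlockTriangular OrderDual.toDual := by
      intro i j hij
      have : i < j := hij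
      simp [hL, not_le.2 this]
    rw [Matrix.det_of_lowerTriangular L htri]
    simp [hL]
  have hdet : Tendsto (fun t => (M t).det) atTop (𝓝 1) := by
    rw [← hLdet]
    exact ((Continuous.matrix_det continuous_id).continuousAt.tendsto).comp hML
  have hev : ∀ᶠ t in atTop, (0 : ℝ) < (M t).det :=
    hdet.eventually (eventually_gt_nhds one_pos)
  obtain ⟨t, ht⟩ := hev.exists
  have hA : (M t).det ≠ 0 := ne_of_gt ht
  set A := M t with hAdef
  set w : Fin n → ℝ := A⁻¹.mulVec y with hw
  refine ⟨fun _ => t, fun i => -(t * c i), w, ?_⟩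
  intro j
  have hAw : A.mulVec w = y := by
    rw [hw, Matrix.mulVec_mulVec, Matrix.mul_nonsing_inv _ (isUnit_iff_ne_zero.2 hA),
      Matrix.one_mulVec]
  have := congrFun hAw j
  rw [Matrix.mulVec, dotProduct] at this
  rw [← this]
  apply Finset.sum_congr rfl
  intro i _
  have harg : t * x j + -(t * c i) = t * (x j - c i) := by ring
  rw [harg, mul_comm]
  rfl
end
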